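/- Every i-filter of a semi-Heyting algebra is a lattice filter, but there exists a semi-Heyting algebra (the two-element chain {0,1} with implication 0⇒0 = 1, 0⇒1 = 0, 1⇒0 = 0, 1⇒1 = 1) and a lattice filter F = {1} of it containing all dense elements such that F is not an i-filter. -/

import Mathlib

/-- A semi-Heyting algebra: a bounded lattice with a binary operation `shimp`
satisfying (SH2) x ⊓ (x ⇒ y) = x ⊓ y, (SH3) x ⊓ (y ⇒ z) = x ⊓ ((x⊓y) ⇒ (x⊓z)),
(SH4) x ⇒ x = ⊤. -/
class SemiHeytingAlgebra (α : Type*) extends Lattice α, BoundedOrder α where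
  shimp : α → α → α
  sh2 : ∀ x y : α, x ⊓ shimp x y = x ⊓ y
  sh3 : ∀ x y z : α, x ⊓ shimp y z = x ⊓ shimp (x ⊓ y) (x ⊓ z)
  sh4 : ∀ x : α, shimp x x = ⊤

open SemiHeytingAlgebra

/-- A lattice filter of a bounded lattice: contains ⊤, closed under ⊓, upward closed. -/
def IsLatticeFilter {α : Type*} [Lattice α] [BoundedOrder α] (F : Set α) : Prop :=
  (⊤ : α) ∈ F ∧ (∀ x ∈ F, ∀ y ∈ F, x ⊓ y ∈ F) ∧ (∀ x ∈ F, ∀ y : α, x ≤ y → y ∈ F)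

/-- An i-filter of a semi-Heyting algebra: a lattice filter containing all dense
elements and such that `z ⊔ t ∈ F` implies `(x ⇒ z) ⊔ (x ⊓ t) ∈ F` for all `x`. -/
def IsIFilter {α : Type*} [SemiHeytingAlgebra α] (F : Set α) : Prop :=
  IsLatticeFilter F ∧
  (∀ x : α, SemiHeytingAlgebra.shimp x ⊥ = ⊥ → x ∈ F) ∧
  (∀ z t : α, z ⊔ t ∈ F → ∀ x : α, SemiHeytingAlgebra.shimp x z ⊔ (x ⊓ t) ∈ F)

/-- The two-element semi-Heyting algebra on `Bool` with the "biconditional"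
implication: 0⇒0 = 1, 0⇒1 = 0, 1⇒0 = 0, 1⇒1 = 1. -/
noncomputable instance boolSemiHeyting : SemiHeytingAlgebra Bool where
  shimp x y := x == y
  sh2 := by decide
  sh3 := by decide
  sh4 := by decide

/-- Every i-filter is a lattice filter, but on the two-element chain above the
lattice filter `F = {⊤}` contains all dense elements yet is not an i-filter. -/
theorem iFilter_latticeFilter_not_conversely :
    (∀ (α : Type*) [SemiHeytingAlgebra α] (F : Set α), IsIFilter F → IsLatticeFilter F) ∧
    (IsLatticeFilter ({⊤} : Set Bool) ∧
      (∀ x : Bool, SemiHeytingAlgebra.shimp x ⊥ = ⊥ → x ∈ ({⊤} : Set Bool)) ∧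
      ¬ IsIFilter ({⊤} : Set Bool)) := by
  refine ⟨fun α _ F h => h.1, ?_, ?_, ?_⟩
  · exact ⟨rfl, by simp, fun x hx y hy => by simp_all [top_le_iff.mp (hx ▸ hy)]⟩
  · intro x hx
    cases x <;> simp_all [boolSemiHeyting, SemiHeytingAlgebra.shimp, Set.mem_singleton_iff]
  · rintro ⟨-, -, h3⟩
    have := h3 ⊤ ⊥ (by simp) ⊥
    simp [boolSemiHeyting, SemiHeytingAlgebra.shimp, Set.mem_singleton_iff] at this
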